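/- Fix k ≥ 4. Let V be a finite set with |V| = 3m, let a : V → ℤ, and let H := {E ⊆ V : |E| = 3, a(E) ≥ 0} be nonempty. Set b := 1 + max{a(E) : E ⊆ V, |E| ≤ k}. Let V' := V ⊎ U where U is a set of (k-3)m new vertices, and define a' : V' → ℤ by a'(u) := 3b for u ∈ U and a'(v) := k·a(v) - (k-3)·b for v ∈ V. Let H' := {E ⊆ V' : |E| = k, a'(E) ≥ 0}. Then H has a perfect matching if and only if H' has a perfect matching. -/

import Mathlib

variable {V : Type*} [DecidableEq V]

/-- Position `i` of the ordering `l` is *dominating* for the `k`-hypergraph `H`: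
every `k`-set `E` with `l.get i ∈ E` contained in the first `i+1` vertices of `l`
is an edge of `H`. -/
def DomAt (k : ℕ) (H : Finset (Finset V)) (l : List V) (i : Fin l.length) : Prop :=
  ∀ E : Finset V, E.card = k → l.get i ∈ E →
    (∀ x ∈ E, x ∈ l.take ((i : ℕ) + 1)) → E ∈ H

/-- Position `i` of the ordering `l` is *isolating* for the `k`-hypergraph `H`:
every `k`-set `E` with `l.get i ∈ E` contained in the first `i+1` vertices of `l`
is a non-edge of `H`. -/
def IsoAt (k : ℕ) (H : Finset (Finset V)) (l : List V) (i : Fin l.length) : Prop :=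
  ∀ E : Finset V, E.card = k → l.get i ∈ E →
    (∀ x ∈ E, x ∈ l.take ((i : ℕ) + 1)) → E ∉ H

/-- `l` is an elimination order for `H`: each position is dominating or isolating. -/
def IsElimOrder (k : ℕ) (H : Finset (Finset V)) (l : List V) : Prop :=
  ∀ i : Fin l.length, DomAt k H l i ∨ IsoAt k H l i

/-- `H` is orderable on vertex set `W`: some enumeration of `W` is an elimination order. -/
def Orderable (k : ℕ) (H : Finset (Finset V)) (W : Finset V) : Prop :=
  ∃ l : List V, l.Nodup ∧ l.toFinset = W ∧ IsElimOrder k H l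

/-- `H` is separable on vertex set `W`: for some labeling `a : V → ℤ`,
`H = {E ⊆ W : |E| = k, a(E) ≥ 0}`. -/
def Separable (k : ℕ) (H : Finset (Finset V)) (W : Finset V) : Prop :=
  ∃ a : V → ℤ, ∀ E : Finset V, E ∈ H ↔ (E ⊆ W ∧ E.card = k ∧ 0 ≤ ∑ v ∈ E, a v)

/-- `M` is a perfect matching of the vertex set `W`: its edges are pairwise
disjoint and their union is `W`. -/
def IsPerfectMatching (M : Finset (Finset V)) (W : Finset V) : Prop :=
  (M : Set (Finset V)).PairwiseDisjoint id ∧ M.biUnion id = W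


/-- In the reduction from separable 3-hypergraphs to separable
`k`-hypergraphs (`k ≥ 4`): with `|V| = 3m`, `H = {E : |E| = 3, a(E) ≥ 0} ≠ ∅`,
`b = 1 + max{a(E) : |E| ≤ k}`, `U` a set of `(k-3)m` new vertices, `a'(u) = 3b` on
`U`, `a'(v) = k·a(v) - (k-3)·b` on `V`, and
`H' = {E' ⊆ V ⊎ U : |E'| = k, a'(E') ≥ 0}`, the hypergraph `H` has a perfect
matching iff `H'` has one. -/
theorem reduction_perfect_matching_iff {V : Type*} [Fintype V] [DecidableEq V]
    (k m : ℕ) (hk : 4 ≤ k) (hcard : Fintype.card V = 3 * m) (a : V → ℤ)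
    (H : Finset (Finset V))
    (hH : ∀ E : Finset V, E ∈ H ↔ (E.card = 3 ∧ 0 ≤ ∑ v ∈ E, a v))
    (hne : H.Nonempty)
    (b : ℤ)
    (hb : IsGreatest {s : ℤ | ∃ E : Finset V, E.card ≤ k ∧ s = ∑ v ∈ E, a v} (b - 1))
    (a' : V ⊕ Fin ((k - 3) * m) → ℤ)
    (ha'V : ∀ v : V, a' (Sum.inl v) = (k : ℤ) * a v - ((k : ℤ) - 3) * b)
    (ha'U : ∀ u : Fin ((k - 3) * m), a' (Sum.inr u) = 3 * b)
    (H' : Finset (Finset (V ⊕ Fin ((k - 3) * m))))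
    (hH' : ∀ E' : Finset (V ⊕ Fin ((k - 3) * m)),
      E' ∈ H' ↔ (E'.card = k ∧ 0 ≤ ∑ x ∈ E', a' x)) :
    (∃ M : Finset (Finset V), M ⊆ H ∧ IsPerfectMatching M Finset.univ) ↔
    (∃ M' : Finset (Finset (V ⊕ Fin ((k - 3) * m))),
      M' ⊆ H' ∧ IsPerfectMatching M' Finset.univ) := by
  have hb1 : (1 : ℤ) ≤ b := by
    have h0 : (0 : ℤ) ∈ {s : ℤ | ∃ E : Finset V, E.card ≤ k ∧ s = ∑ v ∈ E, a v} :=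
      ⟨∅, by simp, by simp⟩
    have := hb.2 h0
    linarith
  -- general sum computation for k-sets of the big type
  have sum_eq : ∀ E' : Finset (V ⊕ Fin ((k - 3) * m)), E'.card = k →
      ∑ x ∈ E', a' x =
        (k : ℤ) * ((∑ v ∈ E'.toLeft, a v) + (3 - (E'.toLeft.card : ℤ)) * b) := by
    intro E' hEk
    have hsplit : E'.toLeft.card + E'.toRight.card = k := by
      rw [Finset.card_toLeft_add_card_toRight, hEk]
    have hR : (E'.toRight.card : ℤ) = (k : ℤ) - E'.toLeft.card := by
      push_cast [← hsplit]; ring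
    have hds := Finset.sum_disjSum E'.toLeft E'.toRight a'
    rw [Finset.toLeft_disjSum_toRight] at hds
    rw [hds]
    have h1 : ∑ x ∈ E'.toLeft, a' (Sum.inl x)
        = (k : ℤ) * (∑ v ∈ E'.toLeft, a v) - (E'.toLeft.card : ℤ) * (((k : ℤ) - 3) * b) := by
      simp only [ha'V]
      rw [Finset.sum_sub_distrib, ← Finset.mul_sum, Finset.sum_const, nsmul_eq_mul]
    have h2 : ∑ x ∈ E'.toRight, a' (Sum.inr x) = (E'.toRight.card : ℤ) * (3 * b) := by
      simp only [ha'U]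
      rw [Finset.sum_const, nsmul_eq_mul]
    rw [h1, h2, hR]
    ring
  constructor
  · rintro ⟨M, hMH, hdisj, hun⟩
    have hM3 : ∀ E ∈ M, E.card = 3 := fun E hE => ((hH E).1 (hMH hE)).1
    have hMcard : M.card = m := by
      have h1 : M.card * 3 = 3 * m := by
        calc M.card * 3 = ∑ _E ∈ M, 3 := by rw [Finset.sum_const, smul_eq_mul]
          _ = ∑ E ∈ M, (id E : Finset V).card :=
              (Finset.sum_congr rfl fun E hE => hM3 E hE).symm
          _ = (M.biUnion id).card := (Finset.card_biUnion (fun x hx y hy hxy =>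
              hdisj hx hy hxy)).symm
          _ = 3 * m := by rw [hun, Finset.card_univ, hcard]
      omega
    have e : ↥M ≃ Fin m := Fintype.equivFinOfCardEq (by rw [Fintype.card_coe, hMcard])
    -- blocks of new vertices
    set q : Fin (k - 3) × Fin m ≃ Fin ((k - 3) * m) := finProdFinEquiv with hq
    set blk : Fin m → Finset (Fin ((k - 3) * m)) :=
      fun j => Finset.univ.image (fun i : Fin (k - 3) => q (i, j)) with hblk
    have hblkmem : ∀ j u, u ∈ blk j ↔ (q.symm u).2 = j := by
      intro j u
      simp only [hblk, Finset.mem_image, Finset.mem_univ, true_and]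
      constructor
      · rintro ⟨i, rfl⟩; simp
      · intro h
        exact ⟨(q.symm u).1, by rw [← h]; simp⟩
    have hblkcard : ∀ j, (blk j).card = k - 3 := by
      intro j
      rw [hblk]
      rw [Finset.card_image_of_injective _ (fun i i' hii =>
        (Prod.ext_iff.1 (q.injective hii)).1), Finset.card_univ, Fintype.card_fin]
    set F : Fin m → Finset (V ⊕ Fin ((k - 3) * m)) :=
      fun j => Finset.disjSum ((e.symm j : Finset V)) (blk j) with hF
    have hFcard : ∀ j, (F j).card = k := by
      intro j
      rw [hF]
      simp only [Finset.card_disjSum, hblkcard, hM3 _ (e.symm j).2]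
      omega
    refine ⟨Finset.univ.image F, ?_, ?_, ?_⟩
    · intro x hx
      obtain ⟨j, _, rfl⟩ := Finset.mem_image.1 hx
      rw [hH']
      refine ⟨hFcard j, ?_⟩
      rw [sum_eq _ (hFcard j)]
      have htl : (F j).toLeft = (e.symm j : Finset V) := by
        simp [hF]
      rw [htl, hM3 _ (e.symm j).2]
      have hA : 0 ≤ ∑ v ∈ (e.symm j : Finset V), a v := ((hH _).1 (hMH (e.symm j).2)).2
      have h30 : ((3:ℤ) - ((3:ℕ):ℤ)) * b = 0 := by push_cast; ring
      rw [h30, add_zero]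
      exact mul_nonneg (by positivity) hA
    · intro x hx y hy hxy
      obtain ⟨j, _, rfl⟩ := Finset.mem_image.1 (by exact_mod_cast hx)
      obtain ⟨j', _, rfl⟩ := Finset.mem_image.1 (by exact_mod_cast hy)
      have hjj : j ≠ j' := fun h => hxy (by rw [h])
      rw [Function.onFun, id, id, Finset.disjoint_left]
      intro z hz hz'
      rcases z with v | u
      · rw [hF] at hz hz'
        simp only [Finset.inl_mem_disjSum] at hz hz'
        have hEne : (e.symm j : Finset V) ≠ (e.symm j' : Finset V) := by
          intro h
          exact hjj (by simpa using congrArg e (Subtype.ext h : e.symm j = e.symm j'))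
        have := hdisj (e.symm j).2 (e.symm j').2 hEne
        exact (Finset.disjoint_left.1 this) hz hz'
      · rw [hF] at hz hz'
        simp only [Finset.inr_mem_disjSum] at hz hz'
        rw [hblkmem] at hz hz'
        exact hjj (hz ▸ hz')
    · ext x
      simp only [Finset.mem_biUnion, Finset.mem_image, id, Finset.mem_univ, iff_true, true_and]
      rcases x with v | u
      · have : v ∈ M.biUnion id := by rw [hun]; exact Finset.mem_univ v
        obtain ⟨E, hE, hv⟩ := Finset.mem_biUnion.1 this
        refine ⟨F (e ⟨E, hE⟩), ⟨e ⟨E, hE⟩, rfl⟩, ?_⟩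
        rw [hF]
        simp only [Finset.inl_mem_disjSum, Equiv.symm_apply_apply]
        exact hv
      · refine ⟨F ((q.symm u).2), ⟨(q.symm u).2, rfl⟩, ?_⟩
        rw [hF]
        simp only [Finset.inr_mem_disjSum, hblkmem]
  · rintro ⟨M', hMH', hdisj', hun'⟩
    have hMk : ∀ E' ∈ M', E'.card = k := fun E' hE' => ((hH' E').1 (hMH' hE')).1
    have hM'card : M'.card = m := by
      have h1 : M'.card * k = k * m := by
        calc M'.card * k = ∑ _E' ∈ M', k := by rw [Finset.sum_const, smul_eq_mul]
          _ = ∑ E' ∈ M', (id E' : Finset _).card :=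
              (Finset.sum_congr rfl fun E' hE' => hMk E' hE').symm
          _ = (M'.biUnion id).card := (Finset.card_biUnion (fun x hx y hy hxy =>
              hdisj' hx hy hxy)).symm
          _ = 3 * m + (k - 3) * m := by
              rw [hun', Finset.card_univ, Fintype.card_sum, hcard, Fintype.card_fin]
          _ = k * m := by rw [← Nat.add_mul]; congr 1; omega
      have hkpos : 0 < k := by omega
      exact Nat.eq_of_mul_eq_mul_right hkpos (h1.trans (Nat.mul_comm k m))
    -- each edge has at most 3 old vertices
    have ht3 : ∀ E' ∈ M', E'.toLeft.card ≤ 3 := by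
      intro E' hE'
      by_contra h
      push_neg at h
      have hpos : 0 ≤ ∑ x ∈ E', a' x := ((hH' E').1 (hMH' hE')).2
      rw [sum_eq _ (hMk E' hE')] at hpos
      have hA : (∑ v ∈ E'.toLeft, a v) ≤ b - 1 :=
        hb.2 ⟨E'.toLeft, le_trans Finset.card_toLeft_le (le_of_eq (hMk E' hE')), rfl⟩
      have ht : (4 : ℤ) ≤ (E'.toLeft.card : ℤ) := by exact_mod_cast h
      have hk4 : (4 : ℤ) ≤ (k : ℤ) := by exact_mod_cast hk
      have h5 := mul_le_mul_of_nonneg_right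
        (show (3 : ℤ) - (E'.toLeft.card : ℤ) ≤ -1 by linarith)
        (show (0 : ℤ) ≤ b by linarith)
      have hX : (∑ v ∈ E'.toLeft, a v) + (3 - (E'.toLeft.card : ℤ)) * b ≤ -1 := by linarith
      have h6 := mul_le_mul_of_nonneg_left hX (show (0 : ℤ) ≤ (k : ℤ) by linarith)
      linarith
    -- disjointness of toLefts
    have hdisjL : ∀ x ∈ M', ∀ y ∈ M', x ≠ y → Disjoint x.toLeft y.toLeft := by
      intro x hx y hy hxy
      have := hdisj' hx hy hxy
      simp only [Function.onFun, id] at this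
      rw [Finset.disjoint_left] at this ⊢
      intro v hv hv'
      exact this (Finset.mem_toLeft.1 hv) (Finset.mem_toLeft.1 hv')
    have hbu : M'.biUnion Finset.toLeft = Finset.univ := by
      ext v
      simp only [Finset.mem_biUnion, Finset.mem_toLeft, Finset.mem_univ, iff_true]
      have : (Sum.inl v : V ⊕ Fin ((k - 3) * m)) ∈ M'.biUnion id := by
        rw [hun']; exact Finset.mem_univ _
      obtain ⟨E', hE', hv⟩ := Finset.mem_biUnion.1 this
      exact ⟨E', hE', hv⟩
    have hsumL : ∑ E' ∈ M', E'.toLeft.card = 3 * m := by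
      have h := Finset.card_biUnion hdisjL
      rw [hbu, Finset.card_univ, hcard] at h
      exact h.symm
    have ht3' : ∀ E' ∈ M', E'.toLeft.card = 3 := by
      have hsum3 : ∑ E' ∈ M', E'.toLeft.card = ∑ _E' ∈ M', 3 := by
        rw [hsumL, Finset.sum_const, smul_eq_mul, hM'card, Nat.mul_comm]
      exact fun E' hE' =>
        (Finset.sum_eq_sum_iff_of_le (fun i hi => ht3 i hi)).1 hsum3 E' hE'
    have hmemH : ∀ E' ∈ M', E'.toLeft ∈ H := by
      intro E' hE'
      have hpos : 0 ≤ ∑ x ∈ E', a' x := ((hH' E').1 (hMH' hE')).2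
      rw [sum_eq _ (hMk E' hE'), ht3' E' hE'] at hpos
      rw [hH]
      refine ⟨ht3' E' hE', ?_⟩
      have hk0 : (0 : ℤ) < (k : ℤ) := by exact_mod_cast (show 0 < k by omega)
      have hpos' : 0 ≤ (k : ℤ) * (∑ v ∈ E'.toLeft, a v) := by
        have h30 : ((3:ℤ) - ((3:ℕ):ℤ)) * b = 0 := by push_cast; ring
        rw [h30, add_zero] at hpos
        exact hpos
      rcases le_or_gt 0 (∑ v ∈ E'.toLeft, a v) with h | h
      · exact h
      · exfalso
        nlinarith [mul_pos hk0 (neg_pos.2 h)]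
    refine ⟨M'.image Finset.toLeft, ?_, ?_, ?_⟩
    · intro x hx
      obtain ⟨E', hE', rfl⟩ := Finset.mem_image.1 hx
      exact hmemH E' hE'
    · intro x hx y hy hxy
      obtain ⟨E', hE', rfl⟩ := Finset.mem_image.1 (by exact_mod_cast hx)
      obtain ⟨F', hF', rfl⟩ := Finset.mem_image.1 (by exact_mod_cast hy)
      have : E' ≠ F' := fun h => hxy (by rw [h])
      exact hdisjL E' hE' F' hF' this
    · ext v
      simp only [Finset.mem_biUnion, Finset.mem_image, id, Finset.mem_univ, iff_true]
      have : (Sum.inl v : V ⊕ Fin ((k - 3) * m)) ∈ M'.biUnion id := by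
        rw [hun']; exact Finset.mem_univ _
      obtain ⟨E', hE', hv⟩ := Finset.mem_biUnion.1 this
      exact ⟨E'.toLeft, ⟨E', hE', rfl⟩, Finset.mem_toLeft.2 hv⟩
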